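/- Let G be a bipartite graph with vertex weights w : V(G) → ℕ₊, let z be a maximum w-matching such that z(e) ≤ 1 for every edge e, and let v be a vertex with w(v) > |V(G)|. Define w* by w*(v) = |V(G)| and w*(u) = w(u) for u ≠ v. Then the set of minimum-weight vertex covers of (G, w) equals the set of minimum-weight vertex covers of (G, w*). -/

import Mathlib

open Finset

variable {V : Type*}

variable {V : Type*}

/-- A set of vertices covering every edge. -/
def IsVertexCover (G : SimpleGraph V) (C : Finset V) : Prop :=
  ∀ ⦃u v : V⦄, G.Adj u v → u ∈ C ∨ v ∈ C

/-- A minimum-weight vertex cover for vertex weights `w`. -/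
def IsMinVertexCover [Fintype V] (G : SimpleGraph V) (w : V → ℕ) (C : Finset V) : Prop :=
  IsVertexCover G C ∧
    ∀ C' : Finset V, IsVertexCover G C' → ∑ x ∈ C, w x ≤ ∑ x ∈ C', w x

/-- A `w`-matching: an assignment of naturals to edges whose total at each vertex is at
most the vertex weight. -/
def IsWMatching [Fintype V] [DecidableEq V] (G : SimpleGraph V) [DecidableRel G.Adj]
    (w : V → ℕ) (z : Sym2 V → ℕ) : Prop :=
  ∀ v : V, ∑ e ∈ G.edgeFinset.filter (fun e => v ∈ e), z e ≤ w v

/-- A maximum `w`-matching: a `w`-matching of maximum total value. -/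
def IsMaxWMatching [Fintype V] [DecidableEq V] (G : SimpleGraph V) [DecidableRel G.Adj]
    (w : V → ℕ) (z : Sym2 V → ℕ) : Prop :=
  IsWMatching G w z ∧
    ∀ z' : Sym2 V → ℕ, IsWMatching G w z' →
      ∑ e ∈ G.edgeFinset, z' e ≤ ∑ e ∈ G.edgeFinset, z e


def dS [Fintype V] [DecidableEq V] (G : SimpleGraph V) [DecidableRel G.Adj]
    (z : Sym2 V → ℕ) (x : V) : ℕ :=
  ∑ e ∈ G.edgeFinset.filter (fun e => x ∈ e), z e

lemma sum_if_add {α : Type*} [DecidableEq α] (s : Finset α) (z : α → ℕ) (e0 : α) :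
    ∑ e ∈ s, (if e = e0 then z e + 1 else z e)
      = (∑ e ∈ s, z e) + (if e0 ∈ s then 1 else 0) := by
  have h : ∀ e, (if e = e0 then z e + 1 else z e) = z e + (if e = e0 then 1 else 0) := by
    intro e; split_ifs <;> omega
  rw [Finset.sum_congr rfl (fun e _ => h e), Finset.sum_add_distrib,
    Finset.sum_ite_eq' s e0 (fun _ => 1)]

lemma sum_if_sub {α : Type*} [DecidableEq α] (s : Finset α) (z : α → ℕ) (e0 : α) (h0 : z e0 ≠ 0) :
    (∑ e ∈ s, (if e = e0 then z e - 1 else z e)) + (if e0 ∈ s then 1 else 0)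
      = ∑ e ∈ s, z e := by
  have h : ∀ e, z e = (if e = e0 then z e - 1 else z e) + (if e = e0 then 1 else 0) := by
    intro e; split_ifs with he
    · subst he; omega
    · omega
  conv_rhs => rw [Finset.sum_congr rfl (fun e _ => h e)]
  rw [Finset.sum_add_distrib, Finset.sum_ite_eq' s e0 (fun _ => 1)]

lemma dS_if_add [Fintype V] [DecidableEq V] (G : SimpleGraph V) [DecidableRel G.Adj]
    (z : Sym2 V → ℕ) (e0 : Sym2 V) (he : e0 ∈ G.edgeFinset) (y : V) :
    dS G (fun e => if e = e0 then z e + 1 else z e) y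
      = dS G z y + (if y ∈ e0 then 1 else 0) := by
  unfold dS
  rw [sum_if_add]
  by_cases hy : y ∈ e0 <;> simp [Finset.mem_filter, he, hy]

lemma dS_if_sub [Fintype V] [DecidableEq V] (G : SimpleGraph V) [DecidableRel G.Adj]
    (z : Sym2 V → ℕ) (e0 : Sym2 V) (he : e0 ∈ G.edgeFinset) (h0 : z e0 ≠ 0) (y : V) :
    dS G (fun e => if e = e0 then z e - 1 else z e) y + (if y ∈ e0 then 1 else 0)
      = dS G z y := by
  unfold dS
  beta_reduce
  have h := sum_if_sub (G.edgeFinset.filter (fun e => y ∈ e)) z e0 h0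
  by_cases hy : y ∈ e0
  · have he' : e0 ∈ G.edgeFinset.filter (fun e => y ∈ e) := Finset.mem_filter.mpr ⟨he, hy⟩
    rw [if_pos he'] at h
    rw [if_pos hy]
    omega
  · have he' : e0 ∉ G.edgeFinset.filter (fun e => y ∈ e) := fun h' => hy (Finset.mem_filter.mp h').2
    rw [if_neg he'] at h
    rw [if_neg hy]
    omega
inductive AltW (G : SimpleGraph V) (c : V → Fin 2) (z : Sym2 V → ℕ) (v : V) : List V → V → Prop
  | base : AltW G c z v [] v
  | stepA {l a b} : AltW G c z v l a → c a = c v → G.Adj a b → AltW G c z v (a :: l) b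
  | stepB {l b a} : AltW G c z v l b → c b ≠ c v → G.Adj b a → z s(b, a) ≠ 0 →
      AltW G c z v (b :: l) a

lemma AltW.drop {G : SimpleGraph V} {c : V → Fin 2} {z : Sym2 V → ℕ} {v : V} {l : List V} {x : V}
    (h : AltW G c z v l x) :
    ∀ l₁ y l₂, l = l₁ ++ y :: l₂ → AltW G c z v l₂ y := by
  induction h with
  | base => intro l₁ y l₂ h; simp at h
  | stepA h1 hca hadj ih =>
    intro l₁ y l₂ heq
    cases l₁ with
    | nil =>
      simp only [List.nil_append, List.cons.injEq] at heq
      obtain ⟨rfl, rfl⟩ := heq; exact h1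
    | cons p l₁' =>
      simp only [List.cons_append, List.cons.injEq] at heq
      exact ih l₁' y l₂ heq.2
  | stepB h1 hcb hadj hz0 ih =>
    intro l₁ y l₂ heq
    cases l₁ with
    | nil =>
      simp only [List.nil_append, List.cons.injEq] at heq
      obtain ⟨rfl, rfl⟩ := heq; exact h1
    | cons p l₁' =>
      simp only [List.cons_append, List.cons.injEq] at heq
      exact ih l₁' y l₂ heq.2

lemma AltW.paste {G : SimpleGraph V} {c : V → Fin 2} {z : Sym2 V → ℕ} {v : V} {L : List V} {y : V}
    (h : AltW G c z v L y) :
    ∀ m x k, L = m ++ x :: k → ∀ k', AltW G c z v k' x → AltW G c z v (m ++ x :: k') y := by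
  induction h with
  | base => intro m x k h; simp at h
  | stepA h1 hca hadj ih =>
    intro m x k heq k' hk'
    cases m with
    | nil =>
      simp only [List.nil_append, List.cons.injEq] at heq
      obtain ⟨rfl, rfl⟩ := heq
      exact AltW.stepA hk' hca hadj
    | cons p m' =>
      simp only [List.cons_append, List.cons.injEq] at heq
      obtain ⟨rfl, heq⟩ := heq
      exact AltW.stepA (ih m' x k heq k' hk') hca hadj
  | stepB h1 hcb hadj hz0 ih =>
    intro m x k heq k' hk'
    cases m with
    | nil =>
      simp only [List.nil_append, List.cons.injEq] at heq
      obtain ⟨rfl, rfl⟩ := heq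
      exact AltW.stepB hk' hcb hadj hz0
    | cons p m' =>
      simp only [List.cons_append, List.cons.injEq] at heq
      obtain ⟨rfl, heq⟩ := heq
      exact AltW.stepB (ih m' x k heq k' hk') hcb hadj hz0

lemma exists_dup_decomp : ∀ (l : List V), ¬ l.Nodup →
    ∃ x l1 l2 l3, l = l1 ++ x :: (l2 ++ x :: l3) := by
  intro l
  induction l with
  | nil => simp
  | cons a t ih =>
    intro h
    by_cases ha : a ∈ t
    · obtain ⟨s, t', rfl⟩ := List.append_of_mem ha
      exact ⟨a, [], s, t', by simp⟩
    · have ht : ¬ t.Nodup := by simp [List.nodup_cons, ha] at h; exact h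
      obtain ⟨x, l1, l2, l3, rfl⟩ := ih ht
      exact ⟨x, a :: l1, l2, l3, rfl⟩
lemma fin2_eq {p q r : Fin 2} (h1 : p ≠ q) (h2 : p ≠ r) : q = r := by omega

lemma augment [Fintype V] [DecidableEq V] (G : SimpleGraph V) [DecidableRel G.Adj]
    (c : G.Coloring (Fin 2)) (w : V → ℕ) (z : Sym2 V → ℕ)
    (hzm : ∀ y, dS G z y ≤ w y) (v : V) (hslack : dS G z v < w v) :
    ∀ l x, AltW G (⇑c) z v l x → (x :: l).Nodup →
      (c x = c v → ∃ z', (∀ y, dS G z' y ≤ w y) ∧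
        (∑ e ∈ G.edgeFinset, z' e = ∑ e ∈ G.edgeFinset, z e) ∧
        dS G z' x < w x ∧ ∀ e, (∃ y ∈ e, y ∉ x :: l) → z' e = z e) ∧
      (c x ≠ c v → ∃ z', (∀ y, y ≠ x → dS G z' y ≤ w y) ∧
        (∑ e ∈ G.edgeFinset, z' e = (∑ e ∈ G.edgeFinset, z e) + 1) ∧
        dS G z' x = dS G z x + 1 ∧ ∀ e, (∃ y ∈ e, y ∉ x :: l) → z' e = z e) := by
  intro l x h
  induction h with
  | base =>
    intro _
    refine ⟨fun _ => ⟨z, hzm, rfl, hslack, fun e _ => rfl⟩, fun h => absurd rfl h⟩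
  | @stepA l a b h1 hca hadj ih =>
    intro nd
    have hcb : c b ≠ c v := by
      intro hb; exact (c.valid hadj) (hca.trans hb.symm)
    refine ⟨fun h => absurd h hcb, fun _ => ?_⟩
    have nd' : (a :: l).Nodup := (List.nodup_cons.mp nd).2
    obtain ⟨z1, hm1, ht1, hs1, hp1⟩ := (ih nd').1 hca
    have hbnot : b ∉ a :: l := (List.nodup_cons.mp nd).1
    have he0 : s(a, b) ∈ G.edgeFinset := by
      rw [SimpleGraph.mem_edgeFinset]; exact hadj
    have hdb1 : dS G z1 b = dS G z b := by
      unfold dS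
      exact Finset.sum_congr rfl (fun e he => hp1 e ⟨b, (Finset.mem_filter.mp he).2, hbnot⟩)
    refine ⟨fun e => if e = s(a, b) then z1 e + 1 else z1 e, ?_, ?_, ?_, ?_⟩
    · intro y hyb
      rw [dS_if_add G z1 _ he0 y]
      by_cases hya : y = a
      · subst hya
        have : y ∈ s(y, b) := Sym2.mem_mk_left y b
        rw [if_pos this]
        omega
      · have : y ∉ s(a, b) := by
          intro hm; rcases Sym2.mem_iff.mp hm with rfl | rfl
          · exact hya rfl
          · exact hyb rfl
        rw [if_neg this]
        have := hm1 y; omega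
    · beta_reduce
      rw [sum_if_add, if_pos he0, ht1]
    · rw [dS_if_add G z1 _ he0 b, hdb1, if_pos (Sym2.mem_mk_right a b)]
    · rintro e ⟨y, hye, hyn⟩
      have hyl : y ∉ a :: l := fun hm => hyn (List.mem_cons_of_mem _ hm)
      have hne : e ≠ s(a, b) := by
        rintro rfl
        rcases Sym2.mem_iff.mp hye with rfl | rfl
        · exact hyn (by simp)
        · exact hyn (by simp)
      simp only [if_neg hne]
      exact hp1 e ⟨y, hye, hyl⟩
  | @stepB l b a h1 hcb hadj hz0 ih =>
    intro nd
    have hca : c a = c v := fin2_eq (c.valid hadj) hcb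
    refine ⟨fun _ => ?_, fun h => absurd hca h⟩
    have nd' : (b :: l).Nodup := (List.nodup_cons.mp nd).2
    obtain ⟨z1, hm1, ht1, hs1, hp1⟩ := (ih nd').2 hcb
    have hanot : a ∉ b :: l := (List.nodup_cons.mp nd).1
    have he0 : s(b, a) ∈ G.edgeFinset := by
      rw [SimpleGraph.mem_edgeFinset]; exact hadj
    have hba : b ≠ a := G.ne_of_adj hadj
    have hz1e0 : z1 s(b, a) = z s(b, a) := hp1 _ ⟨a, Sym2.mem_mk_right b a, hanot⟩
    have h0' : z1 s(b, a) ≠ 0 := by rw [hz1e0]; exact hz0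
    have hda1 : dS G z1 a = dS G z a := by
      unfold dS
      exact Finset.sum_congr rfl (fun e he => hp1 e ⟨a, (Finset.mem_filter.mp he).2, hanot⟩)
    have hkey := fun y => dS_if_sub G z1 s(b, a) he0 h0' y
    refine ⟨fun e => if e = s(b, a) then z1 e - 1 else z1 e, ?_, ?_, ?_, ?_⟩
    · intro y
      by_cases hya : y = a
      · subst hya
        have h := hkey y
        rw [if_pos (Sym2.mem_mk_right b y), hda1] at h
        have := hzm y; omega
      · by_cases hyb : y = b
        · subst hyb
          have h := hkey y
          rw [if_pos (Sym2.mem_mk_left y a), hs1] at h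
          have := hzm y; omega
        · have h := hkey y
          have hnm : y ∉ s(b, a) := by
            intro hm; rcases Sym2.mem_iff.mp hm with rfl | rfl
            · exact hyb rfl
            · exact hya rfl
          rw [if_neg hnm] at h
          have := hm1 y hyb; omega
    · have h := sum_if_sub G.edgeFinset z1 s(b, a) h0'
      rw [if_pos he0] at h
      beta_reduce
      omega
    · have h := hkey a
      rw [if_pos (Sym2.mem_mk_right b a), hda1] at h
      have h2 := hzm a
      have h3 : z s(b, a) ≤ dS G z a := by
        unfold dS
        exact Finset.single_le_sum (fun e _ => Nat.zero_le _)
          (Finset.mem_filter.mpr ⟨he0, Sym2.mem_mk_right b a⟩)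
      omega
    · rintro e ⟨y, hye, hyn⟩
      have hyl : y ∉ b :: l := fun hm => hyn (List.mem_cons_of_mem _ hm)
      have hne : e ≠ s(b, a) := by
        rintro rfl
        rcases Sym2.mem_iff.mp hye with rfl | rfl
        · exact hyn (by simp)
        · exact hyn (by simp)
      simp only [if_neg hne]
      exact hp1 e ⟨y, hye, hyl⟩
lemma saturation [Fintype V] [DecidableEq V] (G : SimpleGraph V) [DecidableRel G.Adj]
    (c : G.Coloring (Fin 2)) (w : V → ℕ) (z : Sym2 V → ℕ)
    (hz : IsMaxWMatching G w z) (v : V) (hslack : dS G z v < w v)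
    {l : List V} {b : V} (halt : AltW G (⇑c) z v l b) (hcb : c b ≠ c v) :
    dS G z b = w b := by
  classical
  have hzm : ∀ y, dS G z y ≤ w y := hz.1
  by_contra hne
  have hlt : dS G z b < w b := lt_of_le_of_ne (hzm b) hne
  have hex : ∃ n, ∃ l' : List V, ∃ b' : V, l'.length = n ∧ AltW G (⇑c) z v l' b' ∧
      c b' ≠ c v ∧ dS G z b' < w b' := ⟨l.length, l, b, rfl, halt, hcb, hlt⟩
  obtain ⟨l0, b0, hlen, h0, hcb0, hlt0⟩ := Nat.find_spec hex
  have hnd : (b0 :: l0).Nodup := by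
    rw [List.nodup_cons]
    constructor
    · intro hb0
      obtain ⟨s, t, rfl⟩ := List.append_of_mem hb0
      have hdrop : AltW G (⇑c) z v t b0 := h0.drop s b0 t rfl
      refine Nat.find_min hex (show t.length < Nat.find hex from ?_) ⟨t, b0, rfl, hdrop, hcb0, hlt0⟩
      rw [← hlen]
      simp only [List.length_append, List.length_cons]
      omega
    · by_contra hndl
      obtain ⟨x, l1, l2, l3, heq⟩ := exists_dup_decomp l0 hndl
      have hdrop : AltW G (⇑c) z v l3 x := h0.drop (l1 ++ x :: l2) x l3 (by rw [heq]; simp)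
      have hpaste : AltW G (⇑c) z v (l1 ++ x :: l3) b0 := h0.paste l1 x (l2 ++ x :: l3) heq l3 hdrop
      refine Nat.find_min hex (show (l1 ++ x :: l3).length < Nat.find hex from ?_)
        ⟨l1 ++ x :: l3, b0, rfl, hpaste, hcb0, hlt0⟩
      rw [← hlen, heq]
      simp only [List.length_append, List.length_cons]
      omega
  obtain ⟨z1, hm1, ht1, hs1, _⟩ := (augment G c w z hzm v hslack l0 b0 h0 hnd).2 hcb0
  have hwm : IsWMatching G w z1 := by
    intro y
    show dS G z1 y ≤ w y
    by_cases hy : y = b0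
    · subst hy; rw [hs1]; omega
    · exact hm1 y hy
  have := hz.2 z1 hwm
  omega

lemma sum_dS_eq' [Fintype V] [DecidableEq V] (G : SimpleGraph V) [DecidableRel G.Adj]
    (z : Sym2 V → ℕ) (T : Finset V) (hT : ∀ ⦃p q : V⦄, G.Adj p q → p ∈ T → q ∉ T) :
    ∑ x ∈ T, dS G z x
      = ∑ e ∈ G.edgeFinset.filter (fun e => ∃ x ∈ T, x ∈ e), z e := by
  classical
  unfold dS
  have l1 : ∑ x ∈ T, ∑ e ∈ G.edgeFinset.filter (fun e => x ∈ e), z e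
      = ∑ x ∈ T, ∑ e ∈ G.edgeFinset, if x ∈ e then z e else 0 := by
    refine Finset.sum_congr rfl (fun x _ => ?_)
    rw [Finset.sum_filter]
  rw [l1, Finset.sum_comm, Finset.sum_filter]
  refine Finset.sum_congr rfl (fun e he => ?_)
  induction e using Sym2.ind with
  | _ p q =>
    have hadj : G.Adj p q := by rwa [SimpleGraph.mem_edgeFinset, SimpleGraph.mem_edgeSet] at he
    by_cases hp : p ∈ T
    · have hq : q ∉ T := hT hadj hp
      rw [if_pos ⟨p, hp, Sym2.mem_mk_left p q⟩, ← Finset.sum_filter]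
      have hfil : T.filter (fun x => x ∈ s(p, q)) = {p} := by
        ext x
        simp only [Finset.mem_filter, Finset.mem_singleton, Sym2.mem_iff]
        constructor
        · rintro ⟨hxT, rfl | rfl⟩
          · rfl
          · exact absurd hxT hq
        · rintro rfl; exact ⟨hp, Or.inl rfl⟩
      rw [hfil, Finset.sum_singleton]
    · by_cases hq : q ∈ T
      · have hp' : p ∉ T := hT hadj.symm hq
        rw [if_pos ⟨q, hq, Sym2.mem_mk_right p q⟩, ← Finset.sum_filter]
        have hfil : T.filter (fun x => x ∈ s(p, q)) = {q} := by
          ext x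
          simp only [Finset.mem_filter, Finset.mem_singleton, Sym2.mem_iff]
          constructor
          · rintro ⟨hxT, rfl | rfl⟩
            · exact absurd hxT hp'
            · rfl
          · rintro rfl; exact ⟨hq, Or.inr rfl⟩
        rw [hfil, Finset.sum_singleton]
      · have hnone : ¬ ∃ x ∈ T, x ∈ s(p, q) := by
          rintro ⟨x, hxT, hxm⟩
          rcases Sym2.mem_iff.mp hxm with rfl | rfl
          · exact hp hxT
          · exact hq hxT
        rw [if_neg hnone]
        refine Finset.sum_eq_zero (fun x hx => ?_)
        rw [if_neg]
        intro hxm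
        rcases Sym2.mem_iff.mp hxm with rfl | rfl
        · exact hp hx
        · exact hq hx

lemma sum_dS_eq [Fintype V] [DecidableEq V] (G : SimpleGraph V) [DecidableRel G.Adj]
    (z : Sym2 V → ℕ) (T : Finset V) (hT : ∀ ⦃p q : V⦄, G.Adj p q → p ∈ T → q ∉ T)
    (E' : Finset (Sym2 V)) (hE' : ∀ e, e ∈ E' ↔ e ∈ G.edgeFinset ∧ ∃ x ∈ T, x ∈ e) :
    ∑ x ∈ T, dS G z x = ∑ e ∈ E', z e := by
  classical
  have hE : E' = G.edgeFinset.filter (fun e => ∃ x ∈ T, x ∈ e) := by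
    ext e
    rw [hE' e, Finset.mem_filter]
  rw [hE]
  exact sum_dS_eq' G z T hT
lemma dS_le_degree [Fintype V] [DecidableEq V] (G : SimpleGraph V) [DecidableRel G.Adj]
    (z : Sym2 V → ℕ) (hz1 : ∀ e ∈ G.edgeFinset, z e ≤ 1) (x : V) :
    dS G z x ≤ G.degree x := by
  have hfe : G.edgeFinset.filter (fun e => x ∈ e) = G.incidenceFinset x := by
    ext e
    simp [SimpleGraph.mem_incidenceFinset, SimpleGraph.incidenceSet,
      SimpleGraph.mem_edgeFinset, Set.mem_setOf_eq]
  calc dS G z x ≤ ∑ e ∈ G.edgeFinset.filter (fun e => x ∈ e), 1 :=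
        Finset.sum_le_sum (fun e he => hz1 e (Finset.mem_filter.mp he).1)
    _ = (G.edgeFinset.filter (fun e => x ∈ e)).card := by simp
    _ = G.degree x := by rw [hfe, SimpleGraph.card_incidenceFinset_eq_degree]

lemma key [Fintype V] [DecidableEq V] (G : SimpleGraph V) [DecidableRel G.Adj]
    (hbip : G.Colorable 2) (w : V → ℕ)
    (z : Sym2 V → ℕ) (hz : IsMaxWMatching G w z)
    (hz1 : ∀ e ∈ G.edgeFinset, z e ≤ 1)
    (v : V) (hdeg : G.degree v < w v)
    (C : Finset V) (hC : IsVertexCover G C) (hvC : v ∈ C) :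
    ∃ C', IsVertexCover G C' ∧ ∑ x ∈ C', w x < ∑ x ∈ C, w x := by
  classical
  obtain ⟨c⟩ := hbip
  have hzm : ∀ y, dS G z y ≤ w y := hz.1
  have hslack : dS G z v < w v := lt_of_le_of_lt (dS_le_degree G z hz1 v) hdeg
  set S : V → Prop := fun x => ∃ l, AltW G (⇑c) z v l x with hS
  have hSv : S v := ⟨[], AltW.base⟩
  have hstepA : ∀ {a b : V}, S a → c a = c v → G.Adj a b → S b := by
    rintro a b ⟨l, hl⟩ hca hadj; exact ⟨a :: l, hl.stepA hca hadj⟩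
  have hstepB : ∀ {b a : V}, S b → c b ≠ c v → G.Adj b a → z s(b, a) ≠ 0 → S a := by
    rintro b a ⟨l, hl⟩ hcb hadj h0; exact ⟨b :: l, hl.stepB hcb hadj h0⟩
  have hsat : ∀ {b : V}, S b → c b ≠ c v → dS G z b = w b := by
    rintro b ⟨l, hl⟩ hcb; exact saturation G c w z hz v hslack hl hcb
  refine ⟨(C.filter (fun x => ¬ S x)) ∪ (Finset.univ.filter (fun x => c x ≠ c v ∧ S x)),
    ?_, ?_⟩
  · -- cover
    have handle : ∀ p q, G.Adj p q → c q ≠ c v →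
        p ∈ (C.filter (fun x => ¬ S x)) ∪ (Finset.univ.filter (fun x => c x ≠ c v ∧ S x)) ∨
        q ∈ (C.filter (fun x => ¬ S x)) ∪ (Finset.univ.filter (fun x => c x ≠ c v ∧ S x)) := by
      intro p q hadj hcq
      by_cases hSq : S q
      · exact Or.inr (Finset.mem_union_right _
          (Finset.mem_filter.mpr ⟨Finset.mem_univ q, hcq, hSq⟩))
      · have hcp : c p = c v := fin2_eq (Ne.symm (c.valid hadj)) hcq
        have hSp : ¬ S p := fun hp => hSq (hstepA hp hcp hadj)
        rcases hC hadj with hpC | hqC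
        · exact Or.inl (Finset.mem_union_left _ (Finset.mem_filter.mpr ⟨hpC, hSp⟩))
        · exact Or.inr (Finset.mem_union_left _ (Finset.mem_filter.mpr ⟨hqC, hSq⟩))
    intro p q hadj
    by_cases hcq : c q = c v
    · have hcp : c p ≠ c v := fun hp => (c.valid hadj) (hp.trans hcq.symm)
      exact (handle q p hadj.symm hcp).symm
    · exact handle p q hadj hcq
  · -- weight
    have hdisj1 : Disjoint (C.filter (fun x => ¬ S x))
        (Finset.univ.filter (fun x => c x ≠ c v ∧ S x)) := by
      rw [Finset.disjoint_left]
      intro x hx hx'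
      exact (Finset.mem_filter.mp hx).2 (Finset.mem_filter.mp hx').2.2
    rw [Finset.sum_union hdisj1]
    have hsplitC : ∑ x ∈ C.filter (fun x => S x), w x
        + ∑ x ∈ C.filter (fun x => ¬ S x), w x = ∑ x ∈ C, w x :=
      Finset.sum_filter_add_sum_filter_not C S w
    have hsplitK : ∑ x ∈ (Finset.univ.filter (fun x => c x ≠ c v ∧ S x)).filter
          (fun x => x ∈ C), w x
        + ∑ x ∈ (Finset.univ.filter (fun x => c x ≠ c v ∧ S x)).filter
          (fun x => x ∉ C), w x
        = ∑ x ∈ Finset.univ.filter (fun x => c x ≠ c v ∧ S x), w x :=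
      Finset.sum_filter_add_sum_filter_not _ (fun x => x ∈ C) w
    -- core strict inequality
    have hcore : ∑ x ∈ (Finset.univ.filter (fun x => c x ≠ c v ∧ S x)).filter
          (fun x => x ∉ C), w x
        < ∑ x ∈ C.filter (fun x => S x ∧ c x = c v), w x := by
      have ha : ∑ x ∈ (Finset.univ.filter (fun x => c x ≠ c v ∧ S x)).filter
            (fun x => x ∉ C), w x
          = ∑ x ∈ (Finset.univ.filter (fun x => c x ≠ c v ∧ S x)).filter
            (fun x => x ∉ C), dS G z x := by
        refine Finset.sum_congr rfl (fun x hx => ?_)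
        have h1 := Finset.mem_filter.mp (Finset.mem_filter.mp hx).1
        exact (hsat h1.2.2 h1.2.1).symm
      have hb : ∑ x ∈ (Finset.univ.filter (fun x => c x ≠ c v ∧ S x)).filter
            (fun x => x ∉ C), dS G z x
          = ∑ e ∈ G.edgeFinset.filter (fun e =>
              ∃ x ∈ (Finset.univ.filter (fun x => c x ≠ c v ∧ S x)).filter
                (fun x => x ∉ C), x ∈ e), z e := by
        refine sum_dS_eq G z _ ?_ _ (fun e => by simp only [Finset.mem_filter])
        intro p q hadj hp hq
        have h1 := (Finset.mem_filter.mp (Finset.mem_filter.mp hp).1).2.1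
        have h2 := (Finset.mem_filter.mp (Finset.mem_filter.mp hq).1).2.1
        have h3 := c.valid hadj
        omega
      have hsub2 : ∀ p q, G.Adj p q →
          p ∈ (Finset.univ.filter (fun x => c x ≠ c v ∧ S x)).filter (fun x => x ∉ C) →
          z s(p, q) ≠ 0 → q ∈ C.filter (fun x => S x ∧ c x = c v) := by
        intro p q hadj hp h0
        have hmem := Finset.mem_filter.mp hp
        have hK := Finset.mem_filter.mp hmem.1
        have hSq : S q := hstepB hK.2.2 hK.2.1 hadj h0
        have hqC : q ∈ C := (hC hadj).resolve_left hmem.2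
        have hcq : c q = c v := fin2_eq (c.valid hadj) hK.2.1
        exact Finset.mem_filter.mpr ⟨hqC, hSq, hcq⟩
      have hc : ∑ e ∈ G.edgeFinset.filter (fun e =>
              ∃ x ∈ (Finset.univ.filter (fun x => c x ≠ c v ∧ S x)).filter
                (fun x => x ∉ C), x ∈ e), z e
          ≤ ∑ e ∈ G.edgeFinset.filter (fun e =>
              ∃ x ∈ C.filter (fun x => S x ∧ c x = c v), x ∈ e), z e := by
        rw [← Finset.sum_filter_ne_zero]
        refine Finset.sum_le_sum_of_subset ?_
        intro e he
        obtain ⟨h1, h0⟩ := Finset.mem_filter.mp he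
        simp only [Finset.mem_filter] at h1
        obtain ⟨heE, x, hxm, hxe⟩ := h1
        obtain ⟨y, rfl⟩ := Sym2.mem_iff_exists.mp hxe
        have hadj : G.Adj x y := by
          rwa [SimpleGraph.mem_edgeFinset, SimpleGraph.mem_edgeSet] at heE
        have hq := hsub2 x y hadj
          (Finset.mem_filter.mpr ⟨Finset.mem_filter.mpr hxm.1, hxm.2⟩) h0
        simp only [Finset.mem_filter]
        exact ⟨heE, y, Finset.mem_filter.mp hq, Sym2.mem_mk_right x y⟩
      have hd : ∑ e ∈ G.edgeFinset.filter (fun e =>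
              ∃ x ∈ C.filter (fun x => S x ∧ c x = c v), x ∈ e), z e
          = ∑ x ∈ C.filter (fun x => S x ∧ c x = c v), dS G z x := by
        refine (sum_dS_eq G z _ ?_ _ (fun e => by simp only [Finset.mem_filter])).symm
        intro p q hadj hp hq
        have h1 := (Finset.mem_filter.mp hp).2.2
        have h2 := (Finset.mem_filter.mp hq).2.2
        have h3 := c.valid hadj
        omega
      have hE : ∑ x ∈ C.filter (fun x => S x ∧ c x = c v), dS G z x
          < ∑ x ∈ C.filter (fun x => S x ∧ c x = c v), w x := by
        refine Finset.sum_lt_sum (fun i _ => hzm i) ⟨v, ?_, hslack⟩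
        exact Finset.mem_filter.mpr ⟨hvC, hSv, rfl⟩
      omega
    have hKCCA : ∑ x ∈ (Finset.univ.filter (fun x => c x ≠ c v ∧ S x)).filter
          (fun x => x ∈ C), w x
        + ∑ x ∈ C.filter (fun x => S x ∧ c x = c v), w x
        ≤ ∑ x ∈ C.filter (fun x => S x), w x := by
      rw [← Finset.sum_union]
      · refine Finset.sum_le_sum_of_subset ?_
        intro x hx
        rcases Finset.mem_union.mp hx with hx | hx
        · have h1 := Finset.mem_filter.mp hx
          have h2 := Finset.mem_filter.mp h1.1
          exact Finset.mem_filter.mpr ⟨h1.2, h2.2.2⟩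
        · have h1 := Finset.mem_filter.mp hx
          exact Finset.mem_filter.mpr ⟨h1.1, h1.2.1⟩
      · rw [Finset.disjoint_left]
        intro x hx hx'
        have h1 := (Finset.mem_filter.mp (Finset.mem_filter.mp hx).1).2.1
        have h2 := (Finset.mem_filter.mp hx').2.2
        exact h1 h2
    omega

/-- Reduction Rule 2. If a maximum `w`-matching of a bipartite graph has
`z(e) ≤ 1` on every edge and a vertex `v` has weight `w(v) > |V(G)|`, then lowering
the weight of `v` to `|V(G)|` preserves the collection of minimum-weight vertex covers. -/
theorem stmt_6 [Fintype V] [DecidableEq V] (G : SimpleGraph V) [DecidableRel G.Adj]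
    (hbip : G.Colorable 2) (w : V → ℕ) (hw : ∀ x, 0 < w x)
    (z : Sym2 V → ℕ) (hz : IsMaxWMatching G w z)
    (hz1 : ∀ e ∈ G.edgeFinset, z e ≤ 1)
    (v : V) (hv : Fintype.card V < w v) :
    ∀ C : Finset V, IsMinVertexCover G w C ↔
      IsMinVertexCover G (Function.update w v (Fintype.card V)) C := by
  classical
  intro C
  set w' : V → ℕ := Function.update w v (Fintype.card V) with hw'def
  have hw'v : w' v = Fintype.card V := Function.update_self v _ w
  have hw'le : ∀ y, w' y ≤ w y := by
    intro y
    by_cases hy : y = v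
    · subst hy; rw [hw'v]; exact le_of_lt hv
    · rw [hw'def, Function.update_of_ne hy]
  have hdeg : G.degree v < w v := lt_trans (G.degree_lt_card_verts v) hv
  have hdeg' : G.degree v < w' v := by rw [hw'v]; exact G.degree_lt_card_verts v
  have hz' : IsMaxWMatching G w' z := by
    constructor
    · intro y
      by_cases hy : y = v
      · subst hy
        show dS G z y ≤ w' y
        rw [hw'v]
        exact lt_of_le_of_lt (dS_le_degree G z hz1 y) (G.degree_lt_card_verts y) |>.le
      · show dS G z y ≤ w' y
        rw [hw'def, Function.update_of_ne hy]
        exact hz.1 y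
    · intro z2 hz2
      refine hz.2 z2 (fun y => le_trans (hz2 y) (hw'le y))
  have hKw : ∀ C₀ : Finset V, IsVertexCover G C₀ → v ∈ C₀ →
      ∃ C1, IsVertexCover G C1 ∧ ∑ x ∈ C1, w x < ∑ x ∈ C₀, w x :=
    fun C₀ h hv0 => key G hbip w z hz hz1 v hdeg C₀ h hv0
  have hKw' : ∀ C₀ : Finset V, IsVertexCover G C₀ → v ∈ C₀ →
      ∃ C1, IsVertexCover G C1 ∧ ∑ x ∈ C1, w' x < ∑ x ∈ C₀, w' x :=
    fun C₀ h hv0 => key G hbip w' z hz' hz1 v hdeg' C₀ h hv0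
  have hmin : ∀ u : V → ℕ, ∃ C0 : Finset V, IsVertexCover G C0 ∧
      ∀ C1 : Finset V, IsVertexCover G C1 → ∑ x ∈ C0, u x ≤ ∑ x ∈ C1, u x := by
    intro u
    have hne : (Finset.univ.filter (fun D : Finset V => IsVertexCover G D)).Nonempty := by
      refine ⟨Finset.univ, Finset.mem_filter.mpr ⟨Finset.mem_univ _, ?_⟩⟩
      intro a b _
      exact Or.inl (Finset.mem_univ a)
    obtain ⟨C0, hC0mem, hC0min⟩ := Finset.exists_min_image _ (fun D => ∑ x ∈ D, u x) hne
    exact ⟨C0, (Finset.mem_filter.mp hC0mem).2,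
      fun C1 h1 => hC0min C1 (Finset.mem_filter.mpr ⟨Finset.mem_univ _, h1⟩)⟩
  have hupd : ∀ D : Finset V, v ∉ D → ∑ x ∈ D, w' x = ∑ x ∈ D, w x := by
    intro D hD
    refine Finset.sum_congr rfl (fun x hx => ?_)
    have hxv : x ≠ v := by rintro rfl; exact hD hx
    rw [hw'def, Function.update_of_ne hxv]
  constructor
  · rintro ⟨hcov, hminC⟩
    have hvnotC : v ∉ C := by
      intro hvC
      obtain ⟨C1, h1, h2⟩ := hKw C hcov hvC
      exact absurd (hminC C1 h1) (by omega)
    refine ⟨hcov, ?_⟩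
    intro C2 h2
    obtain ⟨Cm, hCm, hCmmin⟩ := hmin w'
    have hvm : v ∉ Cm := by
      intro hvm
      obtain ⟨C1, h1, hlt⟩ := hKw' Cm hCm hvm
      exact absurd (hCmmin C1 h1) (by omega)
    calc ∑ x ∈ C, w' x = ∑ x ∈ C, w x := hupd C hvnotC
      _ ≤ ∑ x ∈ Cm, w x := hminC Cm hCm
      _ = ∑ x ∈ Cm, w' x := (hupd Cm hvm).symm
      _ ≤ ∑ x ∈ C2, w' x := hCmmin C2 h2
  · rintro ⟨hcov, hminC⟩
    have hvnotC : v ∉ C := by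
      intro hvC
      obtain ⟨C1, h1, h2⟩ := hKw' C hcov hvC
      exact absurd (hminC C1 h1) (by omega)
    refine ⟨hcov, ?_⟩
    intro C2 h2
    obtain ⟨Cm, hCm, hCmmin⟩ := hmin w
    have hvm : v ∉ Cm := by
      intro hvm
      obtain ⟨C1, h1, hlt⟩ := hKw Cm hCm hvm
      exact absurd (hCmmin C1 h1) (by omega)
    calc ∑ x ∈ C, w x = ∑ x ∈ C, w' x := (hupd C hvnotC).symm
      _ ≤ ∑ x ∈ Cm, w' x := hminC Cm hCm
      _ = ∑ x ∈ Cm, w x := hupd Cm hvm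
      _ ≤ ∑ x ∈ C2, w x := hCmmin C2 h2
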